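/- Let Δ ∈ C(r) have singular value decomposition Δ = Σ_j σ_j u_j v_jᵀ with σ_1 ≥ σ_2 ≥ … and orthonormal families (u_j) in ℝ^d and (v_j) in ℝ^T. For an integer m ≥ 1 define the dyadic spectral block Δ_m = Σ_{2^{m−1} ≤ j < 2^m} σ_j u_j v_jᵀ. Then ‖Δ_m‖_F² ≤ 32·r·‖Δ‖_F² / 2^{m−1}, and every column of Δ_m satisfies ‖(Δ_m)_t‖₂² ≤ 32·r·‖Δ‖_F² / 2^{2(m−1)} for all t ∈ {1,…,T}. -/

import Mathlib

open MeasureTheory ProbabilityTheory Matrix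

/-- The (unordered) singular values of a real `m × n` matrix, indexed by `Fin n`:
the square roots of the eigenvalues of `Aᵀ * A`. -/
noncomputable def singVals {m n : ℕ} (A : Matrix (Fin m) (Fin n) ℝ) : Fin n → ℝ :=
  fun i => Real.sqrt (((show (Aᵀ * A).IsHermitian by
    simpa [Matrix.conjTranspose_eq_transpose_of_trivial] using
      Matrix.isHermitian_conjTranspose_mul_self A)).eigenvalues i)

/-- The nuclear (trace) norm: the sum of the singular values. -/
noncomputable def nucNorm {m n : ℕ} (A : Matrix (Fin m) (Fin n) ℝ) : ℝ := ∑ i, singVals A i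

/-- The Frobenius norm. -/
noncomputable def frobNorm {m n : ℕ} (A : Matrix (Fin m) (Fin n) ℝ) : ℝ :=
  Real.sqrt (∑ i, ∑ j, (A i j) ^ 2)

/-- The operator norm: the largest singular value. -/
noncomputable def opNorm {m n : ℕ} (A : Matrix (Fin m) (Fin n) ℝ) : ℝ := ⨆ i, singVals A i

/-- `Π(Δ) = (I - U Uᵀ) Δ (I - V Vᵀ)`. -/
def projPerp {d T r : ℕ} (U : Matrix (Fin d) (Fin r) ℝ) (V : Matrix (Fin T) (Fin r) ℝ)
    (Δ : Matrix (Fin d) (Fin T) ℝ) : Matrix (Fin d) (Fin T) ℝ :=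
  (1 - U * Uᵀ) * Δ * (1 - V * Vᵀ)

/-- The cone `C(r) = {Δ : ‖Π(Δ)‖_* ≤ 3 ‖Δ - Π(Δ)‖_*}`. -/
noncomputable def coneC {d T r : ℕ} (U : Matrix (Fin d) (Fin r) ℝ)
    (V : Matrix (Fin T) (Fin r) ℝ) : Set (Matrix (Fin d) (Fin T) ℝ) :=
  {Δ | nucNorm (projPerp U V Δ) ≤ 3 * nucNorm (Δ - projPerp U V Δ)}

/-- The block-diagonal quadratic form `∑ t, Δ_tᵀ S_t Δ_t`. -/
noncomputable def quadSum {d T : ℕ} (S : Fin T → Matrix (Fin d) (Fin d) ℝ)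
    (Δ : Matrix (Fin d) (Fin T) ℝ) : ℝ :=
  ∑ t, (fun i => Δ i t) ⬝ᵥ (S t).mulVec (fun i => Δ i t)

/-- The restricted strong convexity condition for the block-diagonal matrix with blocks `S t`,
on the cone `cone`, with constant `κ`. -/
def RSC {d T : ℕ} (S : Fin T → Matrix (Fin d) (Fin d) ℝ)
    (cone : Set (Matrix (Fin d) (Fin T) ℝ)) (κ : ℝ) : Prop :=
  ∀ Δ ∈ cone, 2 * κ * (frobNorm Δ) ^ 2 ≤ quadSum S Δ

/-- The cone-restricted operator norm of the block-diagonal matrix with blocks `S t`. -/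
noncomputable def coneOpNorm {d T : ℕ} (S : Fin T → Matrix (Fin d) (Fin d) ℝ)
    (cone : Set (Matrix (Fin d) (Fin T) ℝ)) : ℝ :=
  sSup {c | ∃ Δ ∈ cone, frobNorm Δ = 1 ∧ c = |quadSum S Δ|}

theorem Matrix.isHermitian_transpose_mul_self {m n : ℕ} (A : Matrix (Fin m) (Fin n) ℝ) :
    (Aᵀ * A).IsHermitian := by
  simpa [Matrix.conjTranspose_eq_transpose_of_trivial] using
    Matrix.isHermitian_conjTranspose_mul_self A

namespace Stmt7Aux
variable {m n p : ℕ}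

lemma dot_self_nonneg (w : Fin n → ℝ) : 0 ≤ w ⬝ᵥ w :=
  Finset.sum_nonneg fun _ _ => mul_self_nonneg _

lemma dot_le_sqrt (a : Fin m → ℝ) (b : Fin m → ℝ) :
    a ⬝ᵥ b ≤ Real.sqrt (a ⬝ᵥ a) * Real.sqrt (b ⬝ᵥ b) := by
  have h := Finset.sum_mul_sq_le_sq_mul_sq Finset.univ a b
  have h2 : (a ⬝ᵥ b)^2 ≤ (a ⬝ᵥ a) * (b ⬝ᵥ b) := by
    simpa [dotProduct, sq, Finset.mul_sum] using h
  calc a ⬝ᵥ b ≤ |a ⬝ᵥ b| := le_abs_self _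
    _ = Real.sqrt ((a ⬝ᵥ b)^2) := (Real.sqrt_sq_eq_abs _).symm
    _ ≤ Real.sqrt ((a ⬝ᵥ a) * (b ⬝ᵥ b)) := Real.sqrt_le_sqrt h2
    _ = _ := Real.sqrt_mul (dot_self_nonneg a) _

lemma mulVec_dot_mulVec (A : Matrix (Fin m) (Fin n) ℝ) (B : Matrix (Fin m) (Fin p) ℝ)
    (x : Fin n → ℝ) (y : Fin p → ℝ) :
    (A *ᵥ x) ⬝ᵥ (B *ᵥ y) = x ⬝ᵥ ((Aᵀ * B) *ᵥ y) := by
  rw [← Matrix.mulVec_mulVec, Matrix.dotProduct_mulVec x, Matrix.vecMul_transpose]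

lemma trace_transpose_mul (A B : Matrix (Fin m) (Fin n) ℝ) :
    (Aᵀ * B).trace = ∑ i, ∑ j, A i j * B i j := by
  rw [Matrix.trace]
  simp only [Matrix.diag, Matrix.mul_apply, Matrix.transpose_apply]
  rw [Finset.sum_comm]

/-- eigenvectors of `AᵀA` as plain vectors -/
noncomputable def zvec (A : Matrix (Fin m) (Fin n) ℝ) : Fin n → Fin n → ℝ :=
  fun i => ⇑((Matrix.isHermitian_transpose_mul_self A).eigenvectorBasis i)

lemma zvec_Q (A : Matrix (Fin m) (Fin n) ℝ) (i k : Fin n) :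
    (IsHermitian.eigenvectorUnitary (Matrix.isHermitian_transpose_mul_self A) :
      Matrix (Fin n) (Fin n) ℝ) k i = zvec A i k := rfl

lemma Q_mul_Qt (A : Matrix (Fin m) (Fin n) ℝ) :
    (IsHermitian.eigenvectorUnitary (Matrix.isHermitian_transpose_mul_self A) :
      Matrix (Fin n) (Fin n) ℝ) *
    (IsHermitian.eigenvectorUnitary (Matrix.isHermitian_transpose_mul_self A) :
      Matrix (Fin n) (Fin n) ℝ)ᵀ = 1 := by
  have h := (IsHermitian.eigenvectorUnitary (Matrix.isHermitian_transpose_mul_self A)).2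
  rw [Matrix.mem_unitaryGroup_iff] at h
  convert h using 2
  rw [Matrix.star_eq_conjTranspose, Matrix.conjTranspose_eq_transpose_of_trivial]

lemma Qt_mul_Q (A : Matrix (Fin m) (Fin n) ℝ) :
    (IsHermitian.eigenvectorUnitary (Matrix.isHermitian_transpose_mul_self A) :
      Matrix (Fin n) (Fin n) ℝ)ᵀ *
    (IsHermitian.eigenvectorUnitary (Matrix.isHermitian_transpose_mul_self A) :
      Matrix (Fin n) (Fin n) ℝ) = 1 := by
  have h := (IsHermitian.eigenvectorUnitary (Matrix.isHermitian_transpose_mul_self A)).2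
  rw [Matrix.mem_unitaryGroup_iff'] at h
  convert h using 2
  rw [Matrix.star_eq_conjTranspose, Matrix.conjTranspose_eq_transpose_of_trivial]

lemma zvec_orth (A : Matrix (Fin m) (Fin n) ℝ) (i j : Fin n) :
    zvec A i ⬝ᵥ zvec A j = if i = j then 1 else 0 := by
  have h := congrFun (congrFun (Qt_mul_Q A) i) j
  simp only [Matrix.mul_apply, Matrix.transpose_apply, Matrix.one_apply] at h
  simp only [dotProduct]; exact h

lemma zvec_parseval (A : Matrix (Fin m) (Fin n) ℝ) (w : Fin n → ℝ) :
    ∑ i, (zvec A i ⬝ᵥ w)^2 = w ⬝ᵥ w := by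
  set Q := (IsHermitian.eigenvectorUnitary (Matrix.isHermitian_transpose_mul_self A) :
      Matrix (Fin n) (Fin n) ℝ)
  have h1 : ∀ i, zvec A i ⬝ᵥ w = (Qᵀ *ᵥ w) i := fun i => rfl
  calc ∑ i, (zvec A i ⬝ᵥ w)^2 = (Qᵀ *ᵥ w) ⬝ᵥ (Qᵀ *ᵥ w) := by
        simp only [h1, pow_two]; rfl
    _ = w ⬝ᵥ ((Qᵀᵀ * Qᵀ) *ᵥ w) := mulVec_dot_mulVec _ _ _ _
    _ = w ⬝ᵥ w := by rw [Matrix.transpose_transpose, Q_mul_Qt A]; simp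

lemma zvec_eig (A : Matrix (Fin m) (Fin n) ℝ) (i : Fin n) :
    (Aᵀ * A) *ᵥ zvec A i
      = (Matrix.isHermitian_transpose_mul_self A).eigenvalues i • zvec A i :=
  Matrix.IsHermitian.mulVec_eigenvectorBasis _ i

lemma Az_dot_Az (A : Matrix (Fin m) (Fin n) ℝ) (i j : Fin n) :
    (A *ᵥ zvec A i) ⬝ᵥ (A *ᵥ zvec A j)
      = if i = j then (Matrix.isHermitian_transpose_mul_self A).eigenvalues i else 0 := by
  rw [mulVec_dot_mulVec, zvec_eig, dotProduct_smul, smul_eq_mul, zvec_orth]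
  by_cases h : i = j <;> simp [h]

lemma normAz (A : Matrix (Fin m) (Fin n) ℝ) (i : Fin n) :
    (A *ᵥ zvec A i) ⬝ᵥ (A *ᵥ zvec A i)
      = (Matrix.isHermitian_transpose_mul_self A).eigenvalues i := by
  rw [Az_dot_Az]; simp

lemma eig_nonneg (A : Matrix (Fin m) (Fin n) ℝ) (i : Fin n) :
    0 ≤ (Matrix.isHermitian_transpose_mul_self A).eigenvalues i := by
  rw [← normAz]; exact dot_self_nonneg _

lemma trace_eq_sum_zvec (A : Matrix (Fin m) (Fin n) ℝ) (X : Matrix (Fin m) (Fin n) ℝ) :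
    (Aᵀ * X).trace = ∑ i, (A *ᵥ zvec A i) ⬝ᵥ (X *ᵥ zvec A i) := by
  set Q := (IsHermitian.eigenvectorUnitary (Matrix.isHermitian_transpose_mul_self A) :
      Matrix (Fin n) (Fin n) ℝ)
  have key : ∀ i, (A *ᵥ zvec A i) ⬝ᵥ (X *ᵥ zvec A i) = (Qᵀ * (Aᵀ * X) * Q) i i := by
    intro i
    rw [mulVec_dot_mulVec]
    simp only [dotProduct, Matrix.mul_apply, Matrix.mulVec, Matrix.transpose_apply,
      dotProduct, Finset.sum_mul, Finset.mul_sum]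
    rw [Finset.sum_comm]
    refine Finset.sum_congr rfl fun k _ => Finset.sum_congr rfl fun l _ =>
      Finset.sum_congr rfl fun a _ => ?_
    show zvec A i l * (A a l * X a k * zvec A i k)
        = zvec A i l * (A a l * X a k) * zvec A i k
    ring
  simp only [key]
  have : ∑ i, (Qᵀ * (Aᵀ * X) * Q) i i = (Qᵀ * (Aᵀ * X) * Q).trace := rfl
  rw [this, Matrix.trace_mul_cycle, ← Matrix.mul_assoc, Q_mul_Qt A, Matrix.one_mul]

lemma singVals_nonneg (A : Matrix (Fin m) (Fin n) ℝ) (i : Fin n) : 0 ≤ singVals A i :=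
  Real.sqrt_nonneg _

lemma nucNorm_nonneg (A : Matrix (Fin m) (Fin n) ℝ) : 0 ≤ nucNorm A :=
  Finset.sum_nonneg fun i _ => singVals_nonneg A i

theorem vonNeumann (A X : Matrix (Fin m) (Fin n) ℝ)
    (hX : ∀ w, (X *ᵥ w) ⬝ᵥ (X *ᵥ w) ≤ w ⬝ᵥ w) :
    (Aᵀ * X).trace ≤ nucNorm A := by
  rw [trace_eq_sum_zvec]
  refine Finset.sum_le_sum fun i _ => ?_
  calc (A *ᵥ zvec A i) ⬝ᵥ (X *ᵥ zvec A i)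
      ≤ Real.sqrt ((A *ᵥ zvec A i) ⬝ᵥ (A *ᵥ zvec A i)) *
        Real.sqrt ((X *ᵥ zvec A i) ⬝ᵥ (X *ᵥ zvec A i)) := dot_le_sqrt _ _
    _ ≤ Real.sqrt ((Matrix.isHermitian_transpose_mul_self A).eigenvalues i) *
        Real.sqrt (zvec A i ⬝ᵥ zvec A i) := by
        rw [normAz]
        exact mul_le_mul_of_nonneg_left (Real.sqrt_le_sqrt (hX _)) (Real.sqrt_nonneg _)
    _ = singVals A i := by rw [zvec_orth]; simp [singVals]

/-- the dual optimizer achieving the nuclear norm -/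
noncomputable def Xopt (A : Matrix (Fin m) (Fin n) ℝ) : Matrix (Fin m) (Fin n) ℝ :=
  ∑ i, (if (Matrix.isHermitian_transpose_mul_self A).eigenvalues i = 0 then 0 else
      (Real.sqrt ((Matrix.isHermitian_transpose_mul_self A).eigenvalues i))⁻¹) •
    Matrix.vecMulVec (A *ᵥ zvec A i) (zvec A i)

lemma vecMulVec_mulVec (a : Fin m → ℝ) (b : Fin n → ℝ) (w : Fin n → ℝ) :
    Matrix.vecMulVec a b *ᵥ w = (b ⬝ᵥ w) • a := by
  ext i
  simp [Matrix.vecMulVec_apply, Matrix.mulVec, dotProduct, Finset.sum_mul, Finset.mul_sum]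
  exact Finset.sum_congr rfl fun k _ => by ring

lemma sum_mulVec' {k : ℕ} (M : Fin k → Matrix (Fin m) (Fin n) ℝ) (w : Fin n → ℝ) :
    (∑ i, M i) *ᵥ w = ∑ i, M i *ᵥ w := by
  ext a
  simp only [Matrix.mulVec, dotProduct, Finset.sum_apply, Matrix.sum_apply, Finset.sum_mul]
  rw [Finset.sum_comm]

lemma sum_dotProduct' {k : ℕ} (f : Fin k → Fin m → ℝ) (b : Fin m → ℝ) :
    (∑ i, f i) ⬝ᵥ b = ∑ i, f i ⬝ᵥ b := by
  simp only [dotProduct, Finset.sum_apply, Finset.sum_mul]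
  rw [Finset.sum_comm]

lemma dotProduct_sum' {k : ℕ} (b : Fin m → ℝ) (f : Fin k → Fin m → ℝ) :
    b ⬝ᵥ (∑ i, f i) = ∑ i, b ⬝ᵥ f i := by
  simp only [dotProduct, Finset.sum_apply, Finset.mul_sum]
  rw [Finset.sum_comm]

lemma Xopt_mulVec (A : Matrix (Fin m) (Fin n) ℝ) (w : Fin n → ℝ) :
    Xopt A *ᵥ w = ∑ i, ((if (Matrix.isHermitian_transpose_mul_self A).eigenvalues i = 0 then 0
      else (Real.sqrt ((Matrix.isHermitian_transpose_mul_self A).eigenvalues i))⁻¹)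
        * (zvec A i ⬝ᵥ w)) • (A *ᵥ zvec A i) := by
  rw [Xopt, sum_mulVec']
  refine Finset.sum_congr rfl fun i _ => ?_
  rw [Matrix.smul_mulVec, vecMulVec_mulVec, smul_smul]

lemma Xopt_contraction (A : Matrix (Fin m) (Fin n) ℝ) (w : Fin n → ℝ) :
    (Xopt A *ᵥ w) ⬝ᵥ (Xopt A *ᵥ w) ≤ w ⬝ᵥ w := by
  rw [Xopt_mulVec]
  set lam := (Matrix.isHermitian_transpose_mul_self A).eigenvalues
  set c := fun i => (if lam i = 0 then (0:ℝ) else (Real.sqrt (lam i))⁻¹)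
  have expand : (∑ i, (c i * (zvec A i ⬝ᵥ w)) • (A *ᵥ zvec A i)) ⬝ᵥ
      (∑ j, (c j * (zvec A j ⬝ᵥ w)) • (A *ᵥ zvec A j))
      = ∑ i, (c i * (zvec A i ⬝ᵥ w))^2 * lam i := by
    rw [sum_dotProduct']
    refine Finset.sum_congr rfl fun i _ => ?_
    rw [dotProduct_sum', Finset.sum_eq_single i]
    · rw [smul_dotProduct, dotProduct_smul, Az_dot_Az]
      simp only [eq_self_iff_true, if_true, smul_eq_mul]
      ring
    · intro j _ hj
      rw [smul_dotProduct, dotProduct_smul, Az_dot_Az]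
      simp [if_neg (Ne.symm hj)]
    · intro h; exact absurd (Finset.mem_univ i) h
  rw [expand, ← zvec_parseval A w]
  refine Finset.sum_le_sum fun i _ => ?_
  have hl := eig_nonneg A i
  by_cases h : lam i = 0
  · have hc : c i = 0 := by simp [c, h]
    rw [hc, h]
    simpa using sq_nonneg (zvec A i ⬝ᵥ w)
  · have hc : c i ^ 2 * lam i = 1 := by
      simp only [c, if_neg h, inv_pow, Real.sq_sqrt hl]
      rw [Real.sq_sqrt hl]; exact inv_mul_cancel₀ h
    refine le_of_eq ?_
    calc (c i * (zvec A i ⬝ᵥ w))^2 * lam i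
        = (zvec A i ⬝ᵥ w)^2 * (c i^2 * lam i) := by ring
      _ = (zvec A i ⬝ᵥ w)^2 := by rw [hc, mul_one]

lemma Xopt_trace (A : Matrix (Fin m) (Fin n) ℝ) : (Aᵀ * Xopt A).trace = nucNorm A := by
  rw [trace_eq_sum_zvec]
  refine Finset.sum_congr rfl fun i _ => ?_
  set lam := (Matrix.isHermitian_transpose_mul_self A).eigenvalues with hlam
  rw [Xopt_mulVec, dotProduct_sum', Finset.sum_eq_single i]
  · rw [dotProduct_smul, Az_dot_Az]
    simp only [if_pos rfl, zvec_orth, smul_eq_mul]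
    have hl := eig_nonneg A i
    by_cases h : lam i = 0
    · simp [singVals, ← hlam, h]
    · rw [if_neg h]
      simp only [if_true, ← hlam, singVals]
      have : (Real.sqrt (lam i))⁻¹ * 1 * lam i = (Real.sqrt (lam i))⁻¹ * (Real.sqrt (lam i) * Real.sqrt (lam i)) := by
        rw [Real.mul_self_sqrt hl]; ring
      rw [this, ← mul_assoc, inv_mul_cancel₀
        (fun hz => h ((Real.sqrt_eq_zero hl).mp hz)), one_mul]
  · intro j _ hj
    rw [dotProduct_smul, Az_dot_Az, zvec_orth, if_neg hj, if_neg (Ne.symm hj)]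
    simp
  · intro h; exact absurd (Finset.mem_univ i) h

lemma nucNorm_le_of_eq_add (A B C : Matrix (Fin m) (Fin n) ℝ) (h : A = B + C) :
    nucNorm A ≤ nucNorm B + nucNorm C := by
  have h1 := Xopt_trace A
  have hsplit : ((B + C)ᵀ * Xopt A).trace = (Bᵀ * Xopt A).trace + (Cᵀ * Xopt A).trace := by
    rw [Matrix.transpose_add, Matrix.add_mul, Matrix.trace_add]
  have h2 : nucNorm A = (Bᵀ * Xopt A).trace + (Cᵀ * Xopt A).trace := by
    rw [← h1, ← hsplit, ← h]
  rw [h2]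
  exact add_le_add (vonNeumann B _ (Xopt_contraction A)) (vonNeumann C _ (Xopt_contraction A))

lemma frobNorm_nonneg (A : Matrix (Fin m) (Fin n) ℝ) : 0 ≤ frobNorm A := Real.sqrt_nonneg _

lemma frobNorm_sq (A : Matrix (Fin m) (Fin n) ℝ) :
    frobNorm A ^ 2 = ∑ i, ∑ j, (A i j)^2 :=
  Real.sq_sqrt (Finset.sum_nonneg fun _ _ => Finset.sum_nonneg fun _ _ => sq_nonneg _)

lemma frobNorm_sq_trace (A : Matrix (Fin m) (Fin n) ℝ) :
    frobNorm A ^ 2 = (Aᵀ * A).trace := by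
  rw [frobNorm_sq, trace_transpose_mul]
  exact Finset.sum_congr rfl fun i _ => Finset.sum_congr rfl fun j _ => (pow_two _)

lemma sum_eig_eq_trace (A : Matrix (Fin m) (Fin n) ℝ) :
    ∑ i, (Matrix.isHermitian_transpose_mul_self A).eigenvalues i = (Aᵀ * A).trace := by
  rw [trace_eq_sum_zvec A A]
  exact (Finset.sum_congr rfl fun i _ => normAz A i).symm

lemma rank_add_le' (B C : Matrix (Fin m) (Fin n) ℝ) : (B + C).rank ≤ B.rank + C.rank := by
  have hlin : (B + C).mulVecLin = B.mulVecLin + C.mulVecLin := Matrix.mulVecLin_add B C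
  have hrange : LinearMap.range (B + C).mulVecLin
      ≤ LinearMap.range B.mulVecLin ⊔ LinearMap.range C.mulVecLin := by
    rintro x ⟨v, rfl⟩
    rw [hlin]
    exact Submodule.mem_sup.2 ⟨B.mulVecLin v, LinearMap.mem_range_self _ v,
      C.mulVecLin v, LinearMap.mem_range_self _ v, rfl⟩
  calc (B + C).rank ≤ Module.finrank ℝ
        ↥(LinearMap.range B.mulVecLin ⊔ LinearMap.range C.mulVecLin) :=
        Submodule.finrank_mono hrange
    _ ≤ B.rank + C.rank := Submodule.finrank_add_le_finrank_add_finrank _ _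

lemma nucNorm_le_sqrt_rank_mul_frob (A : Matrix (Fin m) (Fin n) ℝ) :
    nucNorm A ≤ Real.sqrt (A.rank) * frobNorm A := by
  classical
  set lam := (Matrix.isHermitian_transpose_mul_self A).eigenvalues with hlam
  set S := Finset.univ.filter (fun i => lam i ≠ 0) with hS
  have hcard : (S.card : ℝ) ≤ (A.rank : ℝ) := by
    have h1 : (Aᵀ * A).rank = Fintype.card {i // lam i ≠ 0} :=
      Matrix.IsHermitian.rank_eq_card_non_zero_eigs _
    have h2 : (Aᵀ * A).rank = A.rank := Matrix.rank_transpose_mul_self A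
    have h3 : Fintype.card {i // lam i ≠ 0} = S.card := Fintype.card_subtype _
    exact_mod_cast le_of_eq (by rw [← h3, ← h1, h2])
  have hnuc : nucNorm A = ∑ i ∈ S, Real.sqrt (lam i) := by
    rw [nucNorm]
    rw [← Finset.sum_filter_add_sum_filter_not Finset.univ (fun i => lam i ≠ 0)
      (fun i => singVals A i)]
    have : ∑ i ∈ Finset.univ.filter (fun i => ¬ lam i ≠ 0), singVals A i = 0 := by
      refine Finset.sum_eq_zero fun i hi => ?_
      rw [Finset.mem_filter, not_ne_iff] at hi
      simp [singVals, ← hlam, hi.2]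
    rw [this, add_zero]
    rfl
  have hsq : (∑ i ∈ S, Real.sqrt (lam i))^2 ≤ (S.card : ℝ) * ∑ i ∈ S, lam i := by
    have := sq_sum_le_card_mul_sum_sq (s := S) (f := fun i => Real.sqrt (lam i))
    calc (∑ i ∈ S, Real.sqrt (lam i))^2 ≤ (S.card : ℝ) * ∑ i ∈ S, (Real.sqrt (lam i))^2 := this
      _ = (S.card : ℝ) * ∑ i ∈ S, lam i := by
        congr 1
        exact Finset.sum_congr rfl fun i _ => Real.sq_sqrt (eig_nonneg A i)
  have hsum_le : ∑ i ∈ S, lam i ≤ frobNorm A ^ 2 := by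
    rw [frobNorm_sq_trace, ← sum_eig_eq_trace]
    exact Finset.sum_le_sum_of_subset_of_nonneg (Finset.filter_subset _ _)
      (fun i _ _ => eig_nonneg A i)
  have hfin : nucNorm A ^ 2 ≤ (A.rank : ℝ) * frobNorm A ^ 2 := by
    rw [hnuc]
    calc (∑ i ∈ S, Real.sqrt (lam i))^2 ≤ (S.card : ℝ) * ∑ i ∈ S, lam i := hsq
      _ ≤ (A.rank : ℝ) * frobNorm A ^ 2 := by
        apply mul_le_mul hcard hsum_le (Finset.sum_nonneg fun i _ => eig_nonneg A i)
          (Nat.cast_nonneg _)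
  calc nucNorm A = Real.sqrt (nucNorm A ^ 2) := (Real.sqrt_sq (nucNorm_nonneg A)).symm
    _ ≤ Real.sqrt ((A.rank : ℝ) * frobNorm A ^ 2) := Real.sqrt_le_sqrt hfin
    _ = Real.sqrt (A.rank) * frobNorm A := by
      rw [Real.sqrt_mul (Nat.cast_nonneg _), Real.sqrt_sq (frobNorm_nonneg A)]

lemma bessel {q : ℕ} (v : Fin q → Fin n → ℝ)
    (hv : ∀ i j, v i ⬝ᵥ v j = if i = j then 1 else 0) (w : Fin n → ℝ) :
    ∑ j, (v j ⬝ᵥ w)^2 ≤ w ⬝ᵥ w := by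
  set s := ∑ j, (v j ⬝ᵥ w) • v j with hsdef
  have h0 : 0 ≤ (w - s) ⬝ᵥ (w - s) := dot_self_nonneg _
  have hsw : s ⬝ᵥ w = ∑ j, (v j ⬝ᵥ w)^2 := by
    rw [hsdef, sum_dotProduct']
    exact Finset.sum_congr rfl fun j _ => by rw [smul_dotProduct, smul_eq_mul, pow_two]
  have hws : w ⬝ᵥ s = ∑ j, (v j ⬝ᵥ w)^2 := by
    rw [dotProduct_comm, hsw]
  have hss : s ⬝ᵥ s = ∑ j, (v j ⬝ᵥ w)^2 := by
    rw [hsdef, sum_dotProduct']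
    refine Finset.sum_congr rfl fun j _ => ?_
    rw [smul_dotProduct, dotProduct_sum', Finset.sum_eq_single j]
    · rw [dotProduct_smul, hv]
      simp [pow_two]
    · intro k _ hk
      rw [dotProduct_smul, hv, if_neg (Ne.symm hk)]
      simp
    · intro h; exact absurd (Finset.mem_univ j) h
  have hexp : (w - s) ⬝ᵥ (w - s) = w ⬝ᵥ w - ∑ j, (v j ⬝ᵥ w)^2 := by
    rw [sub_dotProduct, dotProduct_sub, dotProduct_sub, hsw, hws, hss]
    ring
  rw [hexp] at h0
  linarith

lemma vecMulVec_transpose' (a : Fin m → ℝ) (b : Fin n → ℝ) :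
    (Matrix.vecMulVec a b)ᵀ = Matrix.vecMulVec b a := by
  ext i j; simp [Matrix.vecMulVec_apply, mul_comm]

lemma vecMulVec_mul_vecMulVec (a : Fin m → ℝ) (b : Fin n → ℝ) (c : Fin n → ℝ) (d : Fin p → ℝ) :
    Matrix.vecMulVec a b * Matrix.vecMulVec c d = (b ⬝ᵥ c) • Matrix.vecMulVec a d := by
  ext i j
  simp only [Matrix.mul_apply, Matrix.vecMulVec_apply, Matrix.smul_apply, dotProduct,
    smul_eq_mul, Finset.sum_mul, Finset.mul_sum]
  exact Finset.sum_congr rfl fun k _ => by ring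

lemma trace_vecMulVec (a : Fin m → ℝ) (b : Fin m → ℝ) :
    (Matrix.vecMulVec a b).trace = a ⬝ᵥ b := by
  simp [Matrix.trace, Matrix.diag, Matrix.vecMulVec_apply, dotProduct]

lemma dot_sum_smul_orth {q : ℕ} (u : Fin q → Fin m → ℝ)
    (hu : ∀ i j, u i ⬝ᵥ u j = if i = j then 1 else 0) (a : Fin q → ℝ) :
    (∑ j, a j • u j) ⬝ᵥ (∑ j, a j • u j) = ∑ j, (a j)^2 := by
  rw [sum_dotProduct']
  refine Finset.sum_congr rfl fun j _ => ?_
  rw [smul_dotProduct, dotProduct_sum', Finset.sum_eq_single j]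
  · rw [dotProduct_smul, hu]
    simp [pow_two]
  · intro k _ hk
    rw [dotProduct_smul, hu, if_neg (Ne.symm hk)]
    simp
  · intro h; exact absurd (Finset.mem_univ j) h

/-- column of a matrix given by an orthonormal decomposition -/
lemma col_decomp {q : ℕ} (c : Fin q → ℝ) (u : Fin q → Fin m → ℝ) (v : Fin q → Fin n → ℝ)
    (t : Fin n) :
    (fun a => (∑ j, c j • Matrix.vecMulVec (u j) (v j)) a t)
      = ∑ j, (c j * v j t) • u j := by
  ext a
  simp only [Matrix.sum_apply, Matrix.smul_apply, Matrix.vecMulVec_apply, smul_eq_mul,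
    Finset.sum_apply, Pi.smul_apply]
  exact Finset.sum_congr rfl fun j _ => by ring

lemma col_sq_decomp {q : ℕ} (c : Fin q → ℝ) (u : Fin q → Fin m → ℝ) (v : Fin q → Fin n → ℝ)
    (hu : ∀ i j, u i ⬝ᵥ u j = if i = j then 1 else 0) (t : Fin n) :
    ∑ a, ((∑ j, c j • Matrix.vecMulVec (u j) (v j)) a t)^2 = ∑ j, (c j)^2 * (v j t)^2 := by
  have h1 : ∑ a, ((∑ j, c j • Matrix.vecMulVec (u j) (v j)) a t)^2
      = (fun a => (∑ j, c j • Matrix.vecMulVec (u j) (v j)) a t) ⬝ᵥ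
        (fun a => (∑ j, c j • Matrix.vecMulVec (u j) (v j)) a t) := by
    simp [dotProduct, pow_two]
  rw [h1, col_decomp, dot_sum_smul_orth u hu]
  exact Finset.sum_congr rfl fun j _ => by ring

lemma frob_sq_decomp {q : ℕ} (c : Fin q → ℝ) (u : Fin q → Fin m → ℝ) (v : Fin q → Fin n → ℝ)
    (hu : ∀ i j, u i ⬝ᵥ u j = if i = j then 1 else 0)
    (hv : ∀ i j, v i ⬝ᵥ v j = if i = j then 1 else 0) :
    frobNorm (∑ j, c j • Matrix.vecMulVec (u j) (v j)) ^ 2 = ∑ j, (c j)^2 := by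
  rw [frobNorm_sq, Finset.sum_comm]
  calc ∑ t, ∑ a, ((∑ j, c j • Matrix.vecMulVec (u j) (v j)) a t)^2
      = ∑ t, ∑ j, (c j)^2 * (v j t)^2 :=
        Finset.sum_congr rfl fun t _ => col_sq_decomp c u v hu t
    _ = ∑ j, (c j)^2 * ∑ t, (v j t)^2 := by
        rw [Finset.sum_comm]
        exact Finset.sum_congr rfl fun j _ => by rw [Finset.mul_sum]
    _ = ∑ j, (c j)^2 := by
        refine Finset.sum_congr rfl fun j _ => ?_
        have : ∑ t, (v j t)^2 = v j ⬝ᵥ v j := by simp [dotProduct, pow_two]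
        rw [this, hv, if_pos rfl, mul_one]

/-- sum of singular values of an orthonormal decomposition is at most the nuclear norm -/
lemma sum_sv_le_nucNorm {q : ℕ} (A : Matrix (Fin m) (Fin n) ℝ) (c : Fin q → ℝ)
    (u : Fin q → Fin m → ℝ) (v : Fin q → Fin n → ℝ)
    (hu : ∀ i j, u i ⬝ᵥ u j = if i = j then 1 else 0)
    (hv : ∀ i j, v i ⬝ᵥ v j = if i = j then 1 else 0)
    (hA : A = ∑ j, c j • Matrix.vecMulVec (u j) (v j)) :
    ∑ j, c j ≤ nucNorm A := by
  set X := ∑ k, Matrix.vecMulVec (u k) (v k) with hX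
  have hcontr : ∀ w, (X *ᵥ w) ⬝ᵥ (X *ᵥ w) ≤ w ⬝ᵥ w := by
    intro w
    have hXw : X *ᵥ w = ∑ k, (v k ⬝ᵥ w) • u k := by
      rw [hX, sum_mulVec']
      exact Finset.sum_congr rfl fun k _ => vecMulVec_mulVec _ _ _
    rw [hXw, dot_sum_smul_orth u hu]
    exact bessel v hv w
  have htr : (Aᵀ * X).trace = ∑ j, c j := by
    have hAt : Aᵀ = ∑ j, c j • Matrix.vecMulVec (v j) (u j) := by
      rw [hA, Matrix.transpose_sum]
      exact Finset.sum_congr rfl fun j _ => by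
        rw [Matrix.transpose_smul, vecMulVec_transpose']
    rw [hAt, hX, Matrix.sum_mul]
    rw [Matrix.trace_sum]
    refine Finset.sum_congr rfl fun j _ => ?_
    rw [Matrix.mul_sum, Matrix.trace_sum]
    rw [Finset.sum_eq_single j]
    · rw [Matrix.smul_mul, vecMulVec_mul_vecMulVec, hu, if_pos rfl, one_smul,
        Matrix.trace_smul, trace_vecMulVec, hv, if_pos rfl]
      simp
    · intro k _ hk
      rw [Matrix.smul_mul, vecMulVec_mul_vecMulVec, hu, if_neg (Ne.symm hk)]
      simp
    · intro h; exact absurd (Finset.mem_univ j) h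
  rw [← htr]
  exact vonNeumann A X hcontr



variable {d T r : ℕ}

lemma proj_idem {k : ℕ} (U : Matrix (Fin k) (Fin r) ℝ) (hU : Uᵀ * U = 1) :
    (U * Uᵀ) * (U * Uᵀ) = U * Uᵀ := by
  rw [Matrix.mul_assoc, ← Matrix.mul_assoc Uᵀ U Uᵀ, hU, Matrix.one_mul]

lemma proj_perp_zero {k : ℕ} (U : Matrix (Fin k) (Fin r) ℝ) (hU : Uᵀ * U = 1) :
    (U * Uᵀ) * (1 - U * Uᵀ) = 0 := by
  rw [Matrix.mul_sub, Matrix.mul_one, proj_idem U hU, sub_self]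

lemma perp_proj_zero {k : ℕ} (U : Matrix (Fin k) (Fin r) ℝ) (hU : Uᵀ * U = 1) :
    (1 - U * Uᵀ) * (U * Uᵀ) = 0 := by
  rw [Matrix.sub_mul, Matrix.one_mul, proj_idem U hU, sub_self]

lemma perp_idem {k : ℕ} (U : Matrix (Fin k) (Fin r) ℝ) (hU : Uᵀ * U = 1) :
    (1 - U * Uᵀ) * (1 - U * Uᵀ) = 1 - U * Uᵀ := by
  rw [Matrix.mul_sub, Matrix.mul_one, perp_proj_zero U hU, sub_zero]

lemma B_decomp (U : Matrix (Fin d) (Fin r) ℝ) (V : Matrix (Fin T) (Fin r) ℝ)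
    (Δ : Matrix (Fin d) (Fin T) ℝ) :
    Δ - projPerp U V Δ = (U * Uᵀ) * Δ + (1 - U * Uᵀ) * (Δ * (V * Vᵀ)) := by
  simp only [projPerp, Matrix.mul_sub, Matrix.sub_mul, Matrix.one_mul, Matrix.mul_one,
    Matrix.mul_assoc]
  abel

lemma B_rank_le (U : Matrix (Fin d) (Fin r) ℝ) (V : Matrix (Fin T) (Fin r) ℝ)
    (Δ : Matrix (Fin d) (Fin T) ℝ) :
    (Δ - projPerp U V Δ).rank ≤ 2 * r := by
  rw [B_decomp]
  refine le_trans (rank_add_le' _ _) ?_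
  have h1 : ((U * Uᵀ) * Δ).rank ≤ r := by
    refine le_trans (Matrix.rank_mul_le_left _ _) ?_
    refine le_trans (Matrix.rank_mul_le_left _ _) ?_
    simpa using Matrix.rank_le_card_width U
  have h2 : ((1 - U * Uᵀ) * (Δ * (V * Vᵀ))).rank ≤ r := by
    refine le_trans (Matrix.rank_mul_le_right _ _) ?_
    refine le_trans (Matrix.rank_mul_le_right _ _) ?_
    refine le_trans (Matrix.rank_mul_le_left _ _) ?_
    simpa using Matrix.rank_le_card_width V
  omega

lemma B_trace_orth (U : Matrix (Fin d) (Fin r) ℝ) (V : Matrix (Fin T) (Fin r) ℝ)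
    (hU : Uᵀ * U = 1) (hV : Vᵀ * V = 1) (Δ : Matrix (Fin d) (Fin T) ℝ) :
    ((Δ - projPerp U V Δ)ᵀ * projPerp U V Δ).trace = 0 := by
  rw [B_decomp, Matrix.transpose_add, Matrix.add_mul, Matrix.trace_add]
  have hPt : ((U * Uᵀ) * Δ)ᵀ = Δᵀ * (U * Uᵀ) := by
    rw [Matrix.transpose_mul, Matrix.transpose_mul, Matrix.transpose_transpose]
  have hQt : ((1 - U * Uᵀ) * (Δ * (V * Vᵀ)))ᵀ = ((V * Vᵀ) * Δᵀ) * (1 - U * Uᵀ) := by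
    rw [Matrix.transpose_mul, Matrix.transpose_sub, Matrix.transpose_one,
      Matrix.transpose_mul U Uᵀ, Matrix.transpose_transpose,
      Matrix.transpose_mul, Matrix.transpose_mul V Vᵀ, Matrix.transpose_transpose]
  have h1 : (((U * Uᵀ) * Δ)ᵀ * projPerp U V Δ).trace = 0 := by
    rw [hPt, projPerp, Matrix.mul_assoc (1 - U * Uᵀ) Δ (1 - V * Vᵀ),
      Matrix.mul_assoc Δᵀ (U * Uᵀ) _, ← Matrix.mul_assoc (U * Uᵀ) (1 - U * Uᵀ) _,
      proj_perp_zero U hU, Matrix.zero_mul, Matrix.mul_zero, Matrix.trace_zero]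
  have h2 : (((1 - U * Uᵀ) * (Δ * (V * Vᵀ)))ᵀ * projPerp U V Δ).trace = 0 := by
    rw [hQt, projPerp, Matrix.mul_assoc (1 - U * Uᵀ) Δ (1 - V * Vᵀ),
      Matrix.mul_assoc ((V * Vᵀ) * Δᵀ) (1 - U * Uᵀ) _,
      ← Matrix.mul_assoc (1 - U * Uᵀ) (1 - U * Uᵀ) _, perp_idem U hU,
      Matrix.mul_assoc (V * Vᵀ) Δᵀ _]
    rw [Matrix.trace_mul_comm]
    rw [Matrix.mul_assoc Δᵀ ((1 - U * Uᵀ) * (Δ * (1 - V * Vᵀ))) (V * Vᵀ),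
      Matrix.mul_assoc (1 - U * Uᵀ) (Δ * (1 - V * Vᵀ)) (V * Vᵀ),
      Matrix.mul_assoc Δ (1 - V * Vᵀ) (V * Vᵀ), perp_proj_zero V hV, Matrix.mul_zero,
      Matrix.mul_zero, Matrix.mul_zero, Matrix.trace_zero]
  rw [h1, h2, add_zero]

lemma B_frob_le (U : Matrix (Fin d) (Fin r) ℝ) (V : Matrix (Fin T) (Fin r) ℝ)
    (hU : Uᵀ * U = 1) (hV : Vᵀ * V = 1) (Δ : Matrix (Fin d) (Fin T) ℝ) :
    frobNorm (Δ - projPerp U V Δ) ≤ frobNorm Δ := by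
  set B := Δ - projPerp U V Δ with hB
  set P := projPerp U V Δ with hP
  have hsum : Δ = B + P := by rw [hB]; abel
  have horth := B_trace_orth U V hU hV Δ
  have horth' : (Pᵀ * B).trace = 0 := by
    rw [← Matrix.trace_transpose, Matrix.transpose_mul, Matrix.transpose_transpose, horth]
  have hsq : frobNorm Δ ^ 2 = frobNorm B ^ 2 + frobNorm P ^ 2 := by
    rw [frobNorm_sq_trace, frobNorm_sq_trace, frobNorm_sq_trace]
    calc (Δᵀ * Δ).trace = ((B + P)ᵀ * (B + P)).trace := by rw [← hsum]
      _ = (Bᵀ * B).trace + (Bᵀ * P).trace + ((Pᵀ * B).trace + (Pᵀ * P).trace) := by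
          rw [Matrix.transpose_add, Matrix.add_mul, Matrix.mul_add, Matrix.mul_add,
            Matrix.trace_add, Matrix.trace_add, Matrix.trace_add]
      _ = (Bᵀ * B).trace + (Pᵀ * P).trace := by rw [horth, horth']; ring
  have h1 : frobNorm B ^ 2 ≤ frobNorm Δ ^ 2 := by
    rw [hsq]; nlinarith [sq_nonneg (frobNorm P)]
  calc frobNorm B = Real.sqrt (frobNorm B ^ 2) := (Real.sqrt_sq (frobNorm_nonneg _)).symm
    _ ≤ Real.sqrt (frobNorm Δ ^ 2) := Real.sqrt_le_sqrt h1
    _ = frobNorm Δ := Real.sqrt_sq (frobNorm_nonneg _)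

end Stmt7Aux

open Stmt7Aux in
/-- bounds on the dyadic spectral blocks of a matrix in the cone `C(r)`. -/
theorem stmt7 {d T r : ℕ} (hd : 0 < d) (hT : 0 < T) (hr : 0 < r)
    (hrd : r ≤ d) (hrT : r ≤ T)
    (W : Matrix (Fin d) (Fin T) ℝ) (hrank : W.rank = r)
    (U : Matrix (Fin d) (Fin r) ℝ) (V : Matrix (Fin T) (Fin r) ℝ) (Dv : Fin r → ℝ)
    (hU : Uᵀ * U = 1) (hV : Vᵀ * V = 1) (hDv : ∀ i, 0 < Dv i)
    (hW : W = U * Matrix.diagonal Dv * Vᵀ)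
    (Δ : Matrix (Fin d) (Fin T) ℝ) (hΔ : Δ ∈ coneC U V)
    -- singular value decomposition `Δ = ∑ j, σ_j u_j v_jᵀ` (the index `j : Fin p` is
    -- 0-indexed, corresponding to the 1-indexed singular value `σ_{j+1}`)
    (p : ℕ) (σv : Fin p → ℝ) (u : Fin p → Fin d → ℝ) (v : Fin p → Fin T → ℝ)
    (hσ_nonneg : ∀ j, 0 ≤ σv j)
    (hσ_mono : ∀ i j : Fin p, i ≤ j → σv j ≤ σv i)
    (hu_orth : ∀ i j : Fin p, u i ⬝ᵥ u j = if i = j then 1 else 0)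
    (hv_orth : ∀ i j : Fin p, v i ⬝ᵥ v j = if i = j then 1 else 0)
    (hdecomp : Δ = ∑ j, σv j • Matrix.vecMulVec (u j) (v j))
    (m : ℕ) (hm : 1 ≤ m)
    -- the dyadic spectral block `Δ_m = ∑_{2^{m-1} ≤ j < 2^m} σ_j u_j v_jᵀ` (1-indexed `j`)
    (Δm : Matrix (Fin d) (Fin T) ℝ)
    (hΔm : Δm = ∑ j ∈ Finset.univ.filter
        (fun j : Fin p => 2 ^ (m - 1) ≤ j.val + 1 ∧ j.val + 1 < 2 ^ m),
      σv j • Matrix.vecMulVec (u j) (v j)) :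
    (frobNorm Δm) ^ 2 ≤ 32 * r * (frobNorm Δ) ^ 2 / 2 ^ (m - 1) ∧
      ∀ t : Fin T, ∑ i, (Δm i t) ^ 2 ≤ 32 * r * (frobNorm Δ) ^ 2 / 2 ^ (2 * (m - 1)) := by

  classical
  set K : ℕ := 2 ^ (m - 1) with hKdef
  have hK0 : 0 < K := Nat.pow_pos (by norm_num)
  have h2m : 2 ^ m = 2 * K := by
    rw [hKdef, ← pow_succ', Nat.sub_add_cancel hm]
  set F := frobNorm Δ with hF
  have hF0 : 0 ≤ F := frobNorm_nonneg Δ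
  set N := ∑ j, σv j with hN
  have hN0 : 0 ≤ N := Finset.sum_nonneg fun j _ => hσ_nonneg j
  -- the key nuclear-norm chain
  have hN_nuc : N ≤ nucNorm Δ := sum_sv_le_nucNorm Δ σv u v hu_orth hv_orth hdecomp
  have hcone : nucNorm (projPerp U V Δ) ≤ 3 * nucNorm (Δ - projPerp U V Δ) := hΔ
  have hsplit : nucNorm Δ ≤ nucNorm (Δ - projPerp U V Δ) + nucNorm (projPerp U V Δ) :=
    nucNorm_le_of_eq_add Δ _ _ (by abel)
  have h4 : nucNorm Δ ≤ 4 * nucNorm (Δ - projPerp U V Δ) := by linarith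
  have hrank2 : ((Δ - projPerp U V Δ).rank : ℝ) ≤ ((2 * r : ℕ) : ℝ) := by
    exact_mod_cast B_rank_le U V Δ
  have hnucB : nucNorm (Δ - projPerp U V Δ) ≤ Real.sqrt ((2 * r : ℕ)) * F := by
    refine le_trans (nucNorm_le_sqrt_rank_mul_frob _) ?_
    exact mul_le_mul (Real.sqrt_le_sqrt hrank2) (B_frob_le U V hU hV Δ)
      (frobNorm_nonneg _) (Real.sqrt_nonneg _)
  have hNle : N ≤ 4 * (Real.sqrt ((2 * r : ℕ)) * F) := by
    calc N ≤ nucNorm Δ := hN_nuc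
      _ ≤ 4 * nucNorm (Δ - projPerp U V Δ) := h4
      _ ≤ 4 * (Real.sqrt ((2 * r : ℕ)) * F) := by linarith [hnucB]
  have hNsq : N ^ 2 ≤ 32 * r * F ^ 2 := by
    have h1 : N ^ 2 ≤ (4 * (Real.sqrt ((2 * r : ℕ)) * F)) ^ 2 :=
      pow_le_pow_left₀ hN0 hNle 2
    have h2 : (Real.sqrt ((2 * r : ℕ)))^2 = ((2 * r : ℕ) : ℝ) :=
      Real.sq_sqrt (Nat.cast_nonneg _)
    calc N ^ 2 ≤ (4 * (Real.sqrt ((2 * r : ℕ)) * F)) ^ 2 := h1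
      _ = 16 * ((Real.sqrt ((2 * r : ℕ)))^2 * F^2) := by ring
      _ = 16 * (((2 * r : ℕ) : ℝ) * F^2) := by rw [h2]
      _ = 32 * r * F ^ 2 := by push_cast; ring
  -- indicator form of Δm
  set P : Fin p → Prop := fun j => 2 ^ (m - 1) ≤ j.val + 1 ∧ j.val + 1 < 2 ^ m with hPdef
  set c : Fin p → ℝ := fun j => if P j then σv j else 0 with hcdef
  have hc_nonneg : ∀ j, 0 ≤ c j := by
    intro j; rw [hcdef]; dsimp only; split_ifs; exacts [hσ_nonneg j, le_refl 0]
  have hΔm' : Δm = ∑ j, c j • Matrix.vecMulVec (u j) (v j) := by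
    rw [hΔm, Finset.sum_filter]
    refine Finset.sum_congr rfl fun j _ => ?_
    rw [hcdef]; dsimp only
    split_ifs with h
    · rfl
    · rw [zero_smul]
  -- bound on block entries
  have hblock_bound : ∀ j, c j ≤ N / K := by
    by_cases hne : (Finset.univ.filter (fun j : Fin p => P j)).Nonempty
    · obtain ⟨j₀, hj₀⟩ := hne
      rw [Finset.mem_filter] at hj₀
      have hj₀P := hj₀.2
      have hKp : K ≤ p := by
        have := j₀.isLt
        have h1 := hj₀P.1
        omega
      have hi₀lt : K - 1 < p := by omega
      set i₀ : Fin p := ⟨K - 1, hi₀lt⟩ with hi₀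
      have hKσ : (K : ℝ) * σv i₀ ≤ N := by
        have hinj : Function.Injective (Fin.castLE hKp) := Fin.castLE_injective hKp
        have himage : ∑ i ∈ Finset.univ.image (Fin.castLE hKp), σv i
            = ∑ i : Fin K, σv (Fin.castLE hKp i) :=
          Finset.sum_image (fun a _ b _ h => hinj h)
        have hsub : ∑ i ∈ Finset.univ.image (Fin.castLE hKp), σv i ≤ N := by
          rw [hN]
          exact Finset.sum_le_sum_of_subset_of_nonneg (Finset.subset_univ _)
            (fun i _ _ => hσ_nonneg i)
        have hlow : ∀ i : Fin K, σv i₀ ≤ σv (Fin.castLE hKp i) := by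
          intro i
          refine hσ_mono _ _ ?_
          rw [Fin.le_def]
          simp only [Fin.coe_castLE, hi₀]
          omega
        calc (K : ℝ) * σv i₀ = ∑ _i : Fin K, σv i₀ := by
              rw [Finset.sum_const, Finset.card_univ, Fintype.card_fin, nsmul_eq_mul]
          _ ≤ ∑ i : Fin K, σv (Fin.castLE hKp i) := Finset.sum_le_sum fun i _ => hlow i
          _ = ∑ i ∈ Finset.univ.image (Fin.castLE hKp), σv i := himage.symm
          _ ≤ N := hsub
      have hσi₀ : σv i₀ ≤ N / K := by
        rw [le_div_iff₀ (by exact_mod_cast hK0 : (0:ℝ) < (K:ℝ))]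
        linarith [hKσ]
      intro j
      rw [hcdef]; dsimp only
      split_ifs with hPj
      · refine le_trans ?_ hσi₀
        refine hσ_mono i₀ j ?_
        rw [Fin.le_def]
        simp only [hi₀]
        have := hPj.1
        omega
      · positivity
    · intro j
      rw [Finset.not_nonempty_iff_eq_empty] at hne
      have hj : ¬ P j := by
        intro hPj
        have : j ∈ Finset.univ.filter (fun j : Fin p => P j) := by
          rw [Finset.mem_filter]; exact ⟨Finset.mem_univ j, hPj⟩
        rw [hne] at this
        exact absurd this (Finset.notMem_empty j)
      rw [hcdef]; dsimp only
      rw [if_neg hj]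
      positivity
  have hcard : (Finset.univ.filter (fun j : Fin p => P j)).card ≤ K := by
    have : (Finset.univ.filter (fun j : Fin p => P j)).card ≤ (Finset.range K).card := by
      refine Finset.card_le_card_of_injOn (fun j => j.val + 1 - K) ?_ ?_
      · intro j hj
        rw [Finset.mem_coe, Finset.mem_filter] at hj
        rw [Finset.mem_coe, Finset.mem_range]
        show j.val + 1 - K < K
        have h1 := hj.2.1
        have h2 := hj.2.2
        rw [h2m] at h2
        rw [hKdef]
        omega
      · intro a ha b hb hab
        rw [Finset.mem_coe, Finset.mem_filter] at ha hb
        have hab' : a.val + 1 - K = b.val + 1 - K := hab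
        have h1 := ha.2.1
        have h2 := hb.2.1
        rw [hKdef] at hab'
        have : a.val = b.val := by omega
        exact Fin.ext this
    simpa using this
  have hNdiv0 : 0 ≤ N / K := by positivity
  have hfrobΔ : F ^ 2 = ∑ j, (σv j)^2 := by
    rw [hF, hdecomp]
    exact frob_sq_decomp σv u v hu_orth hv_orth
  -- first bound
  constructor
  · have hfm : frobNorm Δm ^ 2 = ∑ j, (c j)^2 := by
      rw [hΔm']
      exact frob_sq_decomp c u v hu_orth hv_orth
    have hsum_c : ∑ j, (c j)^2 ≤ (K : ℝ) * (N / K)^2 := by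
      have h1 : ∑ j, (c j)^2 = ∑ j ∈ Finset.univ.filter (fun j : Fin p => P j), (c j)^2 := by
        rw [Finset.sum_filter]
        refine (Finset.sum_congr rfl fun j _ => ?_).symm
        split_ifs with h
        · rfl
        · rw [hcdef]; dsimp only; rw [if_neg h]; norm_num
      rw [h1]
      calc ∑ j ∈ Finset.univ.filter (fun j : Fin p => P j), (c j)^2
          ≤ ∑ _j ∈ Finset.univ.filter (fun j : Fin p => P j), (N / K)^2 :=
            Finset.sum_le_sum fun j _ => pow_le_pow_left₀ (hc_nonneg j) (hblock_bound j) 2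
        _ = ((Finset.univ.filter (fun j : Fin p => P j)).card : ℝ) * (N / K)^2 := by
            rw [Finset.sum_const, nsmul_eq_mul]
        _ ≤ (K : ℝ) * (N / K)^2 := by
            refine mul_le_mul_of_nonneg_right ?_ (by positivity)
            exact_mod_cast hcard
    have hfinal : (K : ℝ) * (N / K)^2 ≤ 32 * r * F ^ 2 / K := by
      have hKR : (0:ℝ) < (K:ℝ) := by exact_mod_cast hK0
      rw [div_pow]
      rw [show (K:ℝ) * (N^2 / (K:ℝ)^2) = N^2 / K from by field_simp]
      exact (div_le_div_iff_of_pos_right hKR).mpr hNsq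
    have hcast : ((K : ℕ) : ℝ) = (2:ℝ) ^ (m-1) := by
      rw [hKdef]; push_cast; ring
    rw [hfm]
    calc ∑ j, (c j)^2 ≤ (K : ℝ) * (N / K)^2 := hsum_c
      _ ≤ 32 * r * F ^ 2 / K := hfinal
      _ = 32 * r * F ^ 2 / 2 ^ (m-1) := by rw [hcast]
  -- second bound
  · intro t
    have hcol : ∑ i, (Δm i t)^2 = ∑ j, (c j)^2 * (v j t)^2 := by
      rw [hΔm']
      exact col_sq_decomp c u v hu_orth t
    have hvt : ∑ j, (v j t)^2 ≤ 1 := by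
      have hb := bessel v hv_orth (Pi.single t 1)
      have h1 : ∀ j, v j ⬝ᵥ Pi.single t 1 = v j t := by
        intro j
        simp [dotProduct, Pi.single_apply]
      have h2 : (Pi.single t 1 : Fin T → ℝ) ⬝ᵥ Pi.single t 1 = 1 := by
        simp [dotProduct, Pi.single_apply]
      rw [h2] at hb
      calc ∑ j, (v j t)^2 = ∑ j, (v j ⬝ᵥ Pi.single t 1)^2 := by
            exact Finset.sum_congr rfl fun j _ => by rw [h1]
        _ ≤ 1 := hb
    have hKR : (0:ℝ) < (K:ℝ) := by exact_mod_cast hK0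
    have hbound : ∑ j, (c j)^2 * (v j t)^2 ≤ (N / K)^2 := by
      calc ∑ j, (c j)^2 * (v j t)^2 ≤ ∑ j, (N / K)^2 * (v j t)^2 := by
            refine Finset.sum_le_sum fun j _ => ?_
            exact mul_le_mul_of_nonneg_right
              (pow_le_pow_left₀ (hc_nonneg j) (hblock_bound j) 2) (sq_nonneg _)
        _ = (N / K)^2 * ∑ j, (v j t)^2 := by rw [Finset.mul_sum]
        _ ≤ (N / K)^2 * 1 := mul_le_mul_of_nonneg_left hvt (by positivity)
        _ = (N / K)^2 := mul_one _
    have hfinal : (N / K)^2 ≤ 32 * r * F ^ 2 / (K:ℝ)^2 := by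
      rw [div_pow]
      exact (div_le_div_iff_of_pos_right (by positivity)).mpr hNsq
    have hcast : ((K : ℕ) : ℝ)^2 = (2:ℝ) ^ (2 * (m-1)) := by
      rw [hKdef]; push_cast
      rw [mul_comm 2 (m-1), pow_mul]
    rw [hcol]
    calc ∑ j, (c j)^2 * (v j t)^2 ≤ (N / K)^2 := hbound
      _ ≤ 32 * r * F ^ 2 / (K:ℝ)^2 := hfinal
      _ = 32 * r * F ^ 2 / 2 ^ (2*(m-1)) := by rw [hcast]
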